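/- arXiv:2212.06296 — 3 statements merged into one kernel-verified Lean document; each statement's English description precedes it below -/
import Mathlib

section
/- Let x⁰ be a feasible solution of the subtour elimination LP on a finite vertex set V, and suppose there is a pair e₀ = {u₀, v₀} with x⁰_{e₀} = 1. Let E be the set of pairs in the support of x⁰ other than e₀, and let x be the restriction of x⁰ to E. Then x lies in the spanning tree polytope of G = (V, E): x_e ≥ 0 for all e ∈ E, x(E) = |V| − 1, and x(E(S)) ≤ |S| − 1 for every nonempty S ⊆ V, where E(S) is the set of edges of E with both endpoints in S. -/
open Finset

private lemma sym2_pointwise {V : Type*} [Fintype V] [DecidableEq V]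
    (x : Sym2 V → ℝ) (S : Finset V) (e : Sym2 V) :
    ∑ v ∈ S, (if ¬ e.IsDiag ∧ v ∈ e then x e else 0) =
      (if e ∈ univ.filter (fun e : Sym2 V => ¬ e.IsDiag ∧ ∀ v ∈ e, v ∈ S)
        then 2 * x e else 0)
      + (if e ∈ univ.filter (fun e : Sym2 V => ∃ u ∈ S, ∃ w ∉ S, e = s(u, w))
        then x e else 0) := by
  induction e using Sym2.inductionOn with
  | hf a b =>
    by_cases hab : a = b
    · subst hab
      have hd : (s(a, a) : Sym2 V).IsDiag := by simp
      have hC : s(a, a) ∉ univ.filter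
          (fun e : Sym2 V => ∃ u ∈ S, ∃ w ∉ S, e = s(u, w)) := by
        rw [Finset.mem_filter]
        rintro ⟨-, u, hu, w, hw, h⟩
        rw [Sym2.eq_iff] at h
        rcases h with ⟨h1, h2⟩ | ⟨h1, h2⟩ <;> subst h1 <;> subst h2 <;> exact hw hu
      have hA : s(a, a) ∉ univ.filter
          (fun e : Sym2 V => ¬ e.IsDiag ∧ ∀ v ∈ e, v ∈ S) := by
        rw [Finset.mem_filter]; rintro ⟨-, h, -⟩; exact h hd
      have hz : ∀ v ∈ S,
          (if ¬ (s(a,a) : Sym2 V).IsDiag ∧ v ∈ (s(a,a) : Sym2 V) then x s(a,a) else 0) = 0 :=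
        fun v _ => if_neg (fun h => h.1 hd)
      rw [Finset.sum_congr rfl hz, Finset.sum_const, smul_zero, if_neg hA, if_neg hC,
        add_zero]
    · have hdiag : ¬ (s(a, b) : Sym2 V).IsDiag := by simp [hab]
      have hL : ∀ v ∈ S,
          (if ¬ (s(a,b) : Sym2 V).IsDiag ∧ v ∈ (s(a,b) : Sym2 V) then x s(a,b) else 0)
          = (if v = a then x s(a,b) else 0) + (if v = b then x s(a,b) else 0) := by
        intro v _
        by_cases hva : v = a
        · subst hva
          have : v ≠ b := hab
          simp [hdiag, this, Sym2.mem_iff]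
        · by_cases hvb : v = b
          · subst hvb; simp [hdiag, hva, Sym2.mem_iff]
          · simp [hva, hvb, Sym2.mem_iff]
      rw [Finset.sum_congr rfl hL, Finset.sum_add_distrib,
        Finset.sum_ite_eq' S a (fun _ => x s(a,b)),
        Finset.sum_ite_eq' S b (fun _ => x s(a,b))]
      have hAiff : (s(a,b) ∈ univ.filter
          (fun e : Sym2 V => ¬ e.IsDiag ∧ ∀ v ∈ e, v ∈ S)) ↔ (a ∈ S ∧ b ∈ S) := by
        rw [Finset.mem_filter]
        constructor
        · rintro ⟨-, -, h⟩; exact ⟨h a (by simp), h b (by simp)⟩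
        · rintro ⟨h1, h2⟩
          refine ⟨Finset.mem_univ _, hdiag, ?_⟩
          intro v hv
          rw [Sym2.mem_iff] at hv
          rcases hv with rfl | rfl <;> assumption
      have hCiff : (s(a,b) ∈ univ.filter
          (fun e : Sym2 V => ∃ u ∈ S, ∃ w ∉ S, e = s(u, w))) ↔
          ((a ∈ S ∧ b ∉ S) ∨ (b ∈ S ∧ a ∉ S)) := by
        rw [Finset.mem_filter]
        constructor
        · rintro ⟨-, u, hu, w, hw, h⟩
          rw [Sym2.eq_iff] at h
          rcases h with ⟨rfl, rfl⟩ | ⟨rfl, rfl⟩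
          · exact Or.inl ⟨hu, hw⟩
          · exact Or.inr ⟨hu, hw⟩
        · rintro (⟨h1, h2⟩ | ⟨h1, h2⟩)
          · exact ⟨Finset.mem_univ _, a, h1, b, h2, rfl⟩
          · exact ⟨Finset.mem_univ _, b, h1, a, h2, Sym2.eq_swap⟩
      by_cases ha : a ∈ S <;> by_cases hb : b ∈ S
      · rw [if_pos ha, if_pos hb, if_pos (hAiff.mpr ⟨ha, hb⟩),
          if_neg (fun h => by rcases hCiff.mp h with ⟨-, h2⟩ | ⟨-, h2⟩
                              exacts [h2 hb, h2 ha])]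
        ring
      · rw [if_pos ha, if_neg hb, if_neg (fun h => hb (hAiff.mp h).2),
          if_pos (hCiff.mpr (Or.inl ⟨ha, hb⟩))]
        ring
      · rw [if_neg ha, if_pos hb, if_neg (fun h => ha (hAiff.mp h).1),
          if_pos (hCiff.mpr (Or.inr ⟨hb, ha⟩))]
      · rw [if_neg ha, if_neg hb, if_neg (fun h => ha (hAiff.mp h).1),
          if_neg (fun h => by rcases hCiff.mp h with ⟨h1, -⟩ | ⟨h1, -⟩
                              exacts [ha h1, hb h1])]

private lemma key_id {V : Type*} [Fintype V] [DecidableEq V] (x : Sym2 V → ℝ)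
    (hdeg : ∀ v : V,
      ∑ e ∈ (univ.filter fun e : Sym2 V => ¬ e.IsDiag ∧ v ∈ e), x e = 2)
    (S : Finset V) :
    2 * (S.card : ℝ) =
      2 * (∑ e ∈ univ.filter (fun e : Sym2 V => ¬ e.IsDiag ∧ ∀ v ∈ e, v ∈ S), x e)
      + ∑ e ∈ univ.filter (fun e : Sym2 V => ∃ u ∈ S, ∃ w ∉ S, e = s(u, w)), x e := by
  have h1 : ∑ v ∈ S, ∑ e ∈ (univ.filter fun e : Sym2 V => ¬ e.IsDiag ∧ v ∈ e), x e
      = 2 * (S.card : ℝ) := by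
    rw [Finset.sum_congr rfl (fun v _ => hdeg v), Finset.sum_const, nsmul_eq_mul, mul_comm]
  rw [← h1]
  rw [Finset.sum_congr rfl (fun v _ => Finset.sum_filter _ _), Finset.sum_comm]
  rw [Finset.sum_congr rfl (fun e _ => sym2_pointwise x S e), Finset.sum_add_distrib]
  simp only [Finset.sum_ite_mem, Finset.univ_inter]
  rw [Finset.mul_sum]

theorem stmt_1 {V : Type*} [Fintype V] [DecidableEq V]
    (x : Sym2 V → ℝ)
    (hx0 : ∀ e : Sym2 V, 0 ≤ x e)
    (hdeg : ∀ v : V,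
      ∑ e ∈ (univ.filter fun e : Sym2 V => ¬ e.IsDiag ∧ v ∈ e), x e = 2)
    (hcut : ∀ S : Finset V, S.Nonempty → S ≠ univ →
      2 ≤ ∑ e ∈ ((univ : Finset (Sym2 V)).filter
            fun e => ∃ u ∈ S, ∃ w ∉ S, e = s(u, w)), x e)
    (u₀ v₀ : V) (hne : u₀ ≠ v₀) (h1 : x s(u₀, v₀) = 1)
    (E : Finset (Sym2 V))
    (hEdef : E = (univ : Finset (Sym2 V)).filter
      (fun e => ¬ e.IsDiag ∧ x e ≠ 0 ∧ e ≠ s(u₀, v₀))) :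
    (∀ e ∈ E, 0 ≤ x e) ∧
    (∑ e ∈ E, x e = (Fintype.card V : ℝ) - 1) ∧
    (∀ S : Finset V, S.Nonempty →
      ∑ e ∈ E.filter (fun e => ∃ a ∈ S, ∃ b ∈ S, e = s(a, b)), x e
        ≤ (S.card : ℝ) - 1) := by
  have hall : ∑ e ∈ univ.filter (fun e : Sym2 V => ¬ e.IsDiag), x e
      = (Fintype.card V : ℝ) := by
    have h := key_id x hdeg (univ : Finset V)
    have hA : univ.filter (fun e : Sym2 V => ¬ e.IsDiag ∧ ∀ v ∈ e, v ∈ (univ : Finset V))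
        = univ.filter (fun e : Sym2 V => ¬ e.IsDiag) := by
      apply Finset.filter_congr; intro e _; simp
    have hC : (univ.filter (fun e : Sym2 V =>
        ∃ u ∈ (univ : Finset V), ∃ w ∉ (univ : Finset V), e = s(u, w))) = ∅ := by
      apply Finset.filter_false_of_mem; intro e _
      rintro ⟨u, -, w, hw, -⟩; exact hw (Finset.mem_univ w)
    rw [hA, hC] at h
    simp only [Finset.sum_empty, add_zero, Finset.card_univ] at h
    linarith
  have he0mem : s(u₀, v₀) ∈ univ.filter (fun e : Sym2 V => ¬ e.IsDiag) := by
    simp [hne]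
  have hsplit : ∑ e ∈ univ.filter (fun e : Sym2 V => ¬ e.IsDiag), x e
      = ∑ e ∈ E, x e + x s(u₀, v₀) := by
    rw [← Finset.sum_erase_add _ _ he0mem]
    congr 1
    refine (Finset.sum_subset ?_ ?_).symm
    · intro e he
      rw [hEdef, Finset.mem_filter] at he
      rw [Finset.mem_erase, Finset.mem_filter]
      exact ⟨he.2.2.2, Finset.mem_univ e, he.2.1⟩
    · intro e he hne'
      rw [Finset.mem_erase, Finset.mem_filter] at he
      rw [hEdef, Finset.mem_filter] at hne'
      by_contra hxe
      exact hne' ⟨Finset.mem_univ e, he.2.2, hxe, he.1⟩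
  have hsumE : ∑ e ∈ E, x e = (Fintype.card V : ℝ) - 1 := by
    rw [hall, h1] at hsplit; linarith
  refine ⟨fun e _ => hx0 e, hsumE, ?_⟩
  intro S hS
  by_cases hSu : S = univ
  · refine le_trans (Finset.sum_le_sum_of_subset_of_nonneg (Finset.filter_subset _ _)
      (fun e _ _ => hx0 e)) ?_
    rw [hsumE, hSu, Finset.card_univ]
  · have hcutS := hcut S hS hSu
    have hid := key_id x hdeg S
    have hA : ∑ e ∈ univ.filter (fun e : Sym2 V => ¬ e.IsDiag ∧ ∀ v ∈ e, v ∈ S), x e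
        ≤ (S.card : ℝ) - 1 := by linarith
    refine le_trans (Finset.sum_le_sum_of_subset_of_nonneg ?_ (fun e _ _ => hx0 e)) hA
    intro e he
    rw [Finset.mem_filter] at he
    obtain ⟨heE, a, ha, b, hb, rfl⟩ := he
    rw [hEdef, Finset.mem_filter] at heE
    rw [Finset.mem_filter]
    refine ⟨Finset.mem_univ _, heE.2.1, ?_⟩
    intro v hv
    rw [Sym2.mem_iff] at hv
    rcases hv with rfl | rfl <;> assumption
end

section
/- Let G = (V, E) be a finite connected graph with n = |V| ≥ 4 vertices and let η > 0. Let x : E → ℝ≥0 satisfy x(δ(v)) = 2 for every vertex v ∈ V and x(δ(S)) ≥ 2 + η for every S ⊆ V with 2 ≤ |S| ≤ n − 2. Let T ⊆ E be a spanning tree of G, let O(T) be the set of vertices of odd degree in T, and define g : E → ℝ≥0 by g_e = x_e/(2+η) if both endpoints of e have even degree in T, and g_e = x_e/2 otherwise. Then g lies in the O(T)-join polyhedron: for every S ⊆ V with |S ∩ O(T)| odd, g(δ(S)) ≥ 1. -/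
open Finset

/-- A spanning tree of the graph with vertex set `V` and edge set `E`:
a subset of the edges of size `|V| - 1` forming a connected spanning subgraph. -/
def IsSpanningTree {V : Type*} [Fintype V] (T : Finset (Sym2 V)) : Prop :=
  (SimpleGraph.fromEdgeSet (T : Set (Sym2 V))).Connected ∧
    T.card = Fintype.card V - 1

set_option maxRecDepth 8000 in
open scoped Classical in
/-- In the degree cut case, the vector `g` lies in the `O(T)`-join polyhedron. -/
theorem stmt_7 {V : Type*} [Fintype V] [DecidableEq V]
    (E : Finset (Sym2 V)) (hE : ∀ e ∈ E, ¬ e.IsDiag)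
    (hconn : (SimpleGraph.fromEdgeSet (E : Set (Sym2 V))).Connected)
    (hn : 4 ≤ Fintype.card V)
    (η : ℝ) (hη : 0 < η)
    (x : Sym2 V → ℝ) (hx0 : ∀ e ∈ E, 0 ≤ x e)
    (hdeg : ∀ v : V, ∑ e ∈ E.filter (fun e => v ∈ e), x e = 2)
    (hcut : ∀ S : Finset V, 2 ≤ S.card → S.card ≤ Fintype.card V - 2 →
      2 + η ≤ ∑ e ∈ E.filter (fun e => ∃ u ∈ S, ∃ w ∉ S, e = s(u, w)), x e)
    (T : Finset (Sym2 V)) (hTE : T ⊆ E) (hT : IsSpanningTree T)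
    (g : Sym2 V → ℝ)
    (hg : ∀ e ∈ E, g e =
      if ∀ v ∈ e, Even (T.filter (fun f => v ∈ f)).card
      then x e / (2 + η) else x e / 2)
    (S : Finset V)
    (hodd : Odd ((S ∩ univ.filter
        (fun v => Odd (T.filter (fun f => v ∈ f)).card)).card)) :
    1 ≤ ∑ e ∈ E.filter (fun e => ∃ u ∈ S, ∃ w ∉ S, e = s(u, w)), g e := by
  classical
  set n := Fintype.card V with hn_def
  set dg : V → ℕ := fun v => (T.filter (fun f => v ∈ f)).card with hdg
  set O : Finset V := univ.filter (fun v => Odd (dg v)) with hO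
  have h2η : (0:ℝ) < 2 + η := by linarith
  -- handshake: sum of degrees in T is even
  have hcard2 : ∀ e : Sym2 V, ¬ e.IsDiag → (univ.filter (fun v => v ∈ e)).card = 2 := by
    intro e
    induction e using Sym2.ind with
    | _ a b =>
      intro h
      rw [Sym2.mk_isDiag_iff] at h
      have heq : univ.filter (fun v => v ∈ s(a, b)) = {a, b} := by
        ext v
        simp only [mem_filter, mem_univ, true_and, Sym2.mem_iff, mem_insert, mem_singleton]
      rw [heq, card_insert_of_notMem (fun hc => h (mem_singleton.mp hc)), card_singleton]
  have hhs : ∑ v : V, dg v = 2 * T.card := by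
    have h1 : ∀ v : V, dg v = ∑ f ∈ T, if v ∈ f then 1 else 0 := by
      intro v
      show (T.filter (fun f => v ∈ f)).card = _
      rw [Finset.card_filter]
    simp_rw [h1]
    rw [Finset.sum_comm]
    have h2 : ∀ f ∈ T, (∑ v : V, if v ∈ f then 1 else 0) = 2 := by
      intro f hf
      rw [← Finset.card_filter]
      exact hcard2 f (hE f (hTE hf))
    rw [Finset.sum_congr rfl h2, Finset.sum_const, smul_eq_mul, mul_comm]
  have hOeven : Even O.card := by
    have h3 : Even (∑ v : V, dg v) := ⟨T.card, by rw [hhs]; ring⟩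
    rwa [Finset.even_sum_iff_even_card_odd] at h3
  -- singleton sum helper
  have hsingle : ∀ v : V, Odd (dg v) →
      (1:ℝ) ≤ ∑ e ∈ E.filter (fun e => v ∈ e), g e := by
    intro v hv
    have heq : ∀ e ∈ E.filter (fun e => v ∈ e), g e = x e / 2 := by
      intro e he
      rw [mem_filter] at he
      rw [hg e he.1, if_neg]
      push_neg
      exact ⟨v, he.2, Nat.not_even_iff_odd.mpr hv⟩
    rw [Finset.sum_congr rfl heq, ← Finset.sum_div, hdeg v]
    norm_num
  -- the cut filter equals the star filter when the complement of S is a singleton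
  have hstar : ∀ v : V,
      (∀ w : V, w ∉ S ↔ w = v) →
      E.filter (fun e => ∃ u ∈ S, ∃ w ∉ S, e = s(u, w)) = E.filter (fun e => v ∈ e) := by
    intro v hside
    apply Finset.filter_congr
    intro e he
    constructor
    · rintro ⟨u, hu, w, hw, rfl⟩
      rw [hside] at hw
      subst hw
      simp
    · intro hvE
      have hnd := hE e he
      refine ⟨Sym2.Mem.other hvE, ?_, v, (hside v).mpr rfl, ?_⟩
      · by_contra hcon
        exact Sym2.other_ne hnd hvE ((hside _).mp hcon)
      · rw [Sym2.eq_swap, Sym2.other_spec hvE]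
  have hcardle : S.card ≤ n := by
    simpa [hn_def] using S.card_le_univ
  -- case analysis on S.card
  rcases Nat.lt_or_ge S.card 2 with hlt2 | hge2
  · -- S.card = 0 or 1
    have h01 : S.card = 0 ∨ S.card = 1 := by omega
    rcases h01 with h | h
    · rw [Finset.card_eq_zero] at h
      subst h
      simp [Nat.odd_iff] at hodd
    · obtain ⟨v, rfl⟩ := Finset.card_eq_one.mp h
      have hvO : Odd (dg v) := by
        by_contra hcon
        have hempty : ({v} : Finset V) ∩ O = ∅ := by
          ext u
          simp only [mem_inter, mem_singleton, hO, mem_filter, mem_univ, true_and,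
            notMem_empty, iff_false]
          rintro ⟨rfl, h2⟩
          exact hcon h2
        rw [hempty] at hodd
        simp [Nat.odd_iff] at hodd
      have hfeq : E.filter (fun e => ∃ u ∈ ({v} : Finset V), ∃ w ∉ ({v} : Finset V),
          e = s(u, w)) = E.filter (fun e => v ∈ e) := by
        apply Finset.filter_congr
        intro e he
        constructor
        · rintro ⟨u, hu, w, hw, rfl⟩
          rw [mem_singleton] at hu
          subst hu
          simp
        · intro hvE
          have hnd := hE e he
          exact ⟨v, mem_singleton_self v, Sym2.Mem.other hvE,
            by simpa using Sym2.other_ne hnd hvE, (Sym2.other_spec hvE).symm⟩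
      rw [hfeq]
      exact hsingle v hvO
  · rcases Nat.lt_or_ge (n - 2) S.card with hgt | hle
    · -- S.card = n - 1 or n
      rcases Nat.lt_or_ge S.card n with hltn | hgen
      · -- S.card = n - 1
        have hc : S.card = n - 1 := by omega
        have hcompl : (univ \ S).card = 1 := by
          rw [Finset.card_sdiff_of_subset (Finset.subset_univ S), Finset.card_univ, ← hn_def, hc]
          omega
        obtain ⟨v, hv⟩ := Finset.card_eq_one.mp hcompl
        have hside : ∀ w : V, w ∉ S ↔ w = v := by
          intro w
          constructor
          · intro hw
            have hmem : w ∈ univ \ S := Finset.mem_sdiff.mpr ⟨mem_univ w, hw⟩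
            rw [hv] at hmem
            exact Finset.mem_singleton.mp hmem
          · intro hw
            rw [hw]
            intro hvS
            have hmem : v ∈ univ \ S := by rw [hv]; exact Finset.mem_singleton_self v
            exact (Finset.mem_sdiff.mp hmem).2 hvS
        have hvO : Odd (dg v) := by
          have hsplit : (O ∩ S).card + (O \ S).card = O.card :=
            Finset.card_inter_add_card_sdiff O S
          have hOS : Odd ((O ∩ S).card) := by rwa [Finset.inter_comm] at hodd
          have hOdiff : Odd ((O \ S).card) := by
            rcases hOeven with ⟨k, hk⟩
            rcases hOS with ⟨m, hm⟩
            exact ⟨k - m - 1, by omega⟩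
          have hsub : O \ S ⊆ {v} := by
            rw [← hv]
            exact Finset.sdiff_subset_sdiff (Finset.subset_univ O) (le_refl S)
          have hle1 : (O \ S).card ≤ 1 := by
            simpa using Finset.card_le_card hsub
          have hc1 : (O \ S).card = 1 := by
            rcases hOdiff with ⟨m, hm⟩; omega
          obtain ⟨u, hu⟩ := Finset.card_eq_one.mp hc1
          have huv : u ∈ ({v} : Finset V) := hsub (hu ▸ Finset.mem_singleton_self u)
          rw [Finset.mem_singleton] at huv
          subst huv
          have humem : u ∈ O \ S := hu ▸ Finset.mem_singleton_self u
          have huO := (Finset.mem_sdiff.mp humem).1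
          rw [hO, mem_filter] at huO
          exact huO.2
        rw [hstar v hside]
        exact hsingle v hvO
      · -- S.card = n : S = univ
        have hSuniv : S = univ := Finset.eq_univ_of_card S (by omega)
        subst hSuniv
        rw [Finset.univ_inter] at hodd
        exact absurd hodd (Nat.not_odd_iff_even.mpr hOeven)
    · -- degree cut case: 2 ≤ |S| ≤ n - 2
      have hxcut := hcut S hge2 hle
      have hglb : ∀ e ∈ E.filter (fun e => ∃ u ∈ S, ∃ w ∉ S, e = s(u, w)),
          x e ≤ (2 + η) * g e := by
        intro e he
        rw [mem_filter] at he
        rw [hg e he.1]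
        split
        · rw [mul_div_cancel₀ _ (ne_of_gt h2η)]
        · have hx := hx0 e he.1
          have := mul_nonneg hη.le hx
          nlinarith
      have hX : 2 + η ≤ (2 + η) * ∑ e ∈ E.filter
          (fun e => ∃ u ∈ S, ∃ w ∉ S, e = s(u, w)), g e := by
        rw [Finset.mul_sum]
        exact hxcut.trans (Finset.sum_le_sum hglb)
      exact le_of_mul_le_mul_left (by linarith) h2η
end

section
/- Let G = (V, E) be a finite connected graph with n = |V| ≥ 4 vertices and let η > 0. Let x : E → ℝ≥0 satisfy x(δ(v)) = 2 for every vertex v ∈ V and x(δ(S)) ≥ 2 + η for every S ⊆ V with 2 ≤ |S| ≤ n − 2. Let E_g ⊆ E be a set of 'good' edges such that x(δ(v) ∩ E_g) ≥ 1 for every vertex v. Let T ⊆ E be a spanning tree of G and O(T) the set of vertices of odd degree in T. Define b : E → ℝ≥0 by b_e = ((1+η)/(2+η)) x_e if e ∈ E_g and b_e = x_e/(2+η) otherwise. Then b lies in the O(T)-join polyhedron: for every S ⊆ V with |S ∩ O(T)| odd, b(δ(S)) ≥ 1. -/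
open Finset

/-- In the degree cut case, the vector `b` built from good edges lies in the
`O(T)`-join polyhedron. -/
theorem stmt_8 {V : Type*} [Fintype V] [DecidableEq V]
    (E : Finset (Sym2 V)) (hE : ∀ e ∈ E, ¬ e.IsDiag)
    (hconn : (SimpleGraph.fromEdgeSet (E : Set (Sym2 V))).Connected)
    (hn : 4 ≤ Fintype.card V)
    (η : ℝ) (hη : 0 < η)
    (x : Sym2 V → ℝ) (hx0 : ∀ e ∈ E, 0 ≤ x e)
    (hdeg : ∀ v : V, ∑ e ∈ E.filter (fun e => v ∈ e), x e = 2)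
    (hcut : ∀ S : Finset V, 2 ≤ S.card → S.card ≤ Fintype.card V - 2 →
      2 + η ≤ ∑ e ∈ E.filter (fun e => ∃ u ∈ S, ∃ w ∉ S, e = s(u, w)), x e)
    (Eg : Finset (Sym2 V)) (hEg : Eg ⊆ E)
    (hgood : ∀ v : V, 1 ≤ ∑ e ∈ (E ∩ Eg).filter (fun e => v ∈ e), x e)
    (T : Finset (Sym2 V)) (hTE : T ⊆ E) (hT : IsSpanningTree T)
    (b : Sym2 V → ℝ)
    (hb : ∀ e ∈ E, b e =
      if e ∈ Eg then ((1 + η) / (2 + η)) * x e else x e / (2 + η))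
    (S : Finset V)
    (hodd : Odd ((S ∩ univ.filter
        (fun v => Odd (T.filter (fun f => v ∈ f)).card)).card)) :
    1 ≤ ∑ e ∈ E.filter (fun e => ∃ u ∈ S, ∃ w ∉ S, e = s(u, w)), b e := by
  have h2η : (0:ℝ) < 2 + η := by linarith
  -- handshake: the number of odd-degree vertices of T is even
  have hEven : Even ((univ.filter
      (fun v : V => Odd (T.filter (fun f => v ∈ f)).card)).card) := by
    rw [← Finset.even_sum_iff_even_card_odd (fun v => (T.filter (fun f => v ∈ f)).card)]
    have : ∑ v : V, (T.filter (fun f => v ∈ f)).card = ∑ f ∈ T, 2 := by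
      simp_rw [Finset.card_filter]
      rw [Finset.sum_comm]
      refine Finset.sum_congr rfl fun f hf => ?_
      induction f using Sym2.ind with
      | _ a c =>
        have hac : a ≠ c := by simpa [Sym2.mk_isDiag_iff] using hE _ (hTE hf)
        rw [← Finset.card_filter]
        have : (univ.filter (fun v : V => v ∈ s(a,c))) = {a, c} := by
          ext v; simp [Sym2.mem_iff]
        rw [this, Finset.card_insert_of_notMem (by simp [hac]), Finset.card_singleton]
    rw [this, Finset.sum_const, smul_eq_mul]
    exact ⟨T.card, by ring⟩
  -- vertex-degree bound: for every vertex v, b(δ(v)) ≥ 1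
  have key : ∀ v : V, 1 ≤ ∑ e ∈ E.filter (fun e => v ∈ e), b e := by
    intro v
    set D := E.filter (fun e => v ∈ e) with hD
    set A := ∑ e ∈ D.filter (fun e => e ∈ Eg), x e with hAdef
    set B := ∑ e ∈ D.filter (fun e => e ∉ Eg), x e with hBdef
    have hbD : ∑ e ∈ D, b e = ((1+η)/(2+η)) * A + B / (2+η) := by
      rw [hAdef, hBdef, Finset.mul_sum, Finset.sum_div,
        ← Finset.sum_filter_add_sum_filter_not D (fun e => e ∈ Eg) b]
      congr 1
      · refine Finset.sum_congr rfl fun e he => ?_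
        obtain ⟨heD, heg⟩ := Finset.mem_filter.mp he
        rw [hb e (Finset.mem_filter.mp heD).1, if_pos heg]
      · refine Finset.sum_congr rfl fun e he => ?_
        obtain ⟨heD, heg⟩ := Finset.mem_filter.mp he
        rw [hb e (Finset.mem_filter.mp heD).1, if_neg heg]
    have hA1 : 1 ≤ A := by
      have hset : (E ∩ Eg).filter (fun e => v ∈ e) = D.filter (fun e => e ∈ Eg) := by
        ext e
        simp only [Finset.mem_filter, Finset.mem_inter, hD]
        tauto
      have := hgood v
      rwa [hset] at this
    have hAB : A + B = 2 := by
      rw [hAdef, hBdef, Finset.sum_filter_add_sum_filter_not]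
      exact hdeg v
    rw [hbD, div_mul_eq_mul_div, ← add_div, le_div_iff₀ h2η]
    nlinarith
  -- case analysis on |S|
  rcases Nat.lt_or_ge S.card 2 with h1 | h1
  · rcases (by omega : S.card = 0 ∨ S.card = 1) with h0 | h0
    · -- |S| = 0 : contradiction with parity
      rw [Finset.card_eq_zero.mp h0] at hodd
      simp at hodd
    · -- |S| = 1
      obtain ⟨v, hv⟩ := Finset.card_eq_one.mp h0
      subst hv
      have hset : E.filter (fun e => ∃ u ∈ ({v} : Finset V), ∃ w ∉ ({v} : Finset V), e = s(u, w))
          = E.filter (fun e => v ∈ e) := by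
        refine Finset.filter_congr fun e he => ?_
        constructor
        · rintro ⟨u, hu, w, hw, rfl⟩
          simp only [Finset.mem_singleton] at hu
          subst hu; simp [Sym2.mem_iff]
        · intro hv'
          induction e using Sym2.ind with
          | _ a c =>
            have hac : a ≠ c := by simpa [Sym2.mk_isDiag_iff] using hE _ he
            rcases Sym2.mem_iff.mp hv' with rfl | rfl
            · exact ⟨v, by simp, c, by simp [hac.symm, Ne.symm], rfl⟩
            · exact ⟨v, by simp, a, by simp [hac], Sym2.eq_swap⟩
      rw [hset]
      exact key v
  · rcases le_or_gt S.card (Fintype.card V - 2) with h2 | h2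
    · -- 2 ≤ |S| ≤ n - 2 : use the cut bound
      have hbx : ∀ e ∈ E, x e / (2+η) ≤ b e := by
        intro e he
        rw [hb e he]
        split
        · rw [div_mul_eq_mul_div, div_le_div_iff_of_pos_right h2η]
          nlinarith [hx0 e he]
        · exact le_refl _
      calc (1:ℝ) = (2+η)/(2+η) := (div_self h2η.ne').symm
        _ ≤ (∑ e ∈ E.filter (fun e => ∃ u ∈ S, ∃ w ∉ S, e = s(u, w)), x e) / (2+η) := by
            gcongr
            exact hcut S h1 h2
        _ = ∑ e ∈ E.filter (fun e => ∃ u ∈ S, ∃ w ∉ S, e = s(u, w)), x e / (2+η) :=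
            by rw [Finset.sum_div]
        _ ≤ _ := Finset.sum_le_sum fun e he =>
            hbx e (Finset.mem_filter.mp he).1
    · have hle : S.card ≤ Fintype.card V := Finset.card_le_univ S
      have : S.card = Fintype.card V - 1 ∨ S.card = Fintype.card V := by omega
      rcases this with h3 | h3
      · -- |S| = n - 1
        have hcc : Sᶜ.card = 1 := by
          rw [Finset.card_compl, h3]; omega
        obtain ⟨v, hv⟩ := Finset.card_eq_one.mp hcc
        have hmem : ∀ w : V, w ∉ S ↔ w = v := by
          intro w
          rw [← Finset.mem_compl, hv, Finset.mem_singleton]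
        have hset : E.filter (fun e => ∃ u ∈ S, ∃ w ∉ S, e = s(u, w))
            = E.filter (fun e => v ∈ e) := by
          refine Finset.filter_congr fun e he => ?_
          constructor
          · rintro ⟨u, hu, w, hw, rfl⟩
            rw [hmem] at hw
            subst hw; simp [Sym2.mem_iff]
          · intro hv'
            induction e using Sym2.ind with
            | _ a c =>
              have hac : a ≠ c := by simpa [Sym2.mk_isDiag_iff] using hE _ he
              rcases Sym2.mem_iff.mp hv' with rfl | rfl
              · refine ⟨c, ?_, v, by rw [hmem], Sym2.eq_swap⟩
                by_contra hcS
                exact hac ((hmem c).mp hcS).symm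
              · refine ⟨a, ?_, v, by rw [hmem], rfl⟩
                by_contra haS
                exact hac ((hmem a).mp haS)
        rw [hset]
        exact key v
      · -- |S| = n : contradiction with parity
        have : S = univ := Finset.eq_univ_of_card S h3
        subst this
        rw [Finset.univ_inter] at hodd
        exact absurd hodd (Nat.not_odd_iff_even.mpr hEven)
end
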